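/- arXiv:2112.14045 — 9 statements merged into one kernel-verified Lean document; each statement's English description precedes it below -/
import Mathlib

section
/- For a finitely supported probability distribution ω on a set X and a fuzzy predicate p : X → [0,1], if the validity ω ⊨ p := Σ_x ω(x)·p(x) is nonzero, then the validity of p in the updated distribution ω|_p, defined by ω|_p(x) = ω(x)·p(x)/(ω ⊨ p), is at least the validity of p in ω: (ω|_p ⊨ p) ≥ (ω ⊨ p). -/
/-- Pearl's update rightness: updating a distribution with a fuzzy predicate
increases the validity of that predicate. -/
theorem update_rightness {X : Type*} (ω p : X → ℝ)
    (hω0 : ∀ x, 0 ≤ ω x) (hω1 : ∀ x, ω x ≤ 1)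
    (hfin : (Function.support ω).Finite)
    (hsum : ∑ᶠ x, ω x = 1)
    (hp0 : ∀ x, 0 ≤ p x) (hp1 : ∀ x, p x ≤ 1)
    (v : ℝ) (hv : v = ∑ᶠ x, ω x * p x) (hv0 : v ≠ 0) :
    v ≤ ∑ᶠ x, (ω x * p x / v) * p x := by
  classical
  set s := hfin.toFinset with hs
  have hsub : ∀ x, x ∉ s → ω x = 0 := by
    intro x hx
    by_contra h
    exact hx (hfin.mem_toFinset.2 h)
  have h1 : ∑ᶠ x, ω x = ∑ x ∈ s, ω x :=
    finsum_eq_sum_of_support_subset _ (by intro x hx; exact hfin.mem_toFinset.2 hx)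
  have h2 : ∑ᶠ x, ω x * p x = ∑ x ∈ s, ω x * p x := by
    refine finsum_eq_sum_of_support_subset _ ?_
    intro x hx
    apply hfin.mem_toFinset.2
    intro h
    exact hx (by simp [Function.mem_support, h] at hx ⊢)
  have h3 : ∑ᶠ x, (ω x * p x / v) * p x = ∑ x ∈ s, (ω x * p x / v) * p x := by
    refine finsum_eq_sum_of_support_subset _ ?_
    intro x hx
    apply hfin.mem_toFinset.2
    intro h
    exact hx (by simp [Function.mem_support, h] at hx ⊢)
  have hvnn : 0 ≤ v := by
    rw [hv, h2]; exact Finset.sum_nonneg fun x _ => mul_nonneg (hω0 x) (hp0 x)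
  have hvpos : 0 < v := lt_of_le_of_ne hvnn (Ne.symm hv0)
  -- Cauchy-Schwarz with f = √ω, g = √ω * p
  have key : (∑ x ∈ s, ω x * p x) ^ 2 ≤ (∑ x ∈ s, ω x) * ∑ x ∈ s, ω x * p x ^ 2 := by
    have := Finset.sum_mul_sq_le_sq_mul_sq s (fun x => Real.sqrt (ω x))
      (fun x => Real.sqrt (ω x) * p x)
    have e1 : ∀ x, Real.sqrt (ω x) * (Real.sqrt (ω x) * p x) = ω x * p x := by
      intro x; rw [← mul_assoc, Real.mul_self_sqrt (hω0 x)]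
    have e2 : ∀ x, Real.sqrt (ω x) ^ 2 = ω x := fun x => Real.sq_sqrt (hω0 x)
    have e3 : ∀ x, (Real.sqrt (ω x) * p x) ^ 2 = ω x * p x ^ 2 := by
      intro x; rw [mul_pow, e2]
    simp only [e1, e2, e3] at this
    exact this
  rw [h1] at hsum
  rw [h2] at hv
  rw [hsum, one_mul] at key
  rw [h3]
  have : ∑ x ∈ s, (ω x * p x / v) * p x = (∑ x ∈ s, ω x * p x ^ 2) / v := by
    rw [Finset.sum_div]
    refine Finset.sum_congr rfl fun x _ => ?_
    field_simp
  rw [this, le_div_iff₀ hvpos]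
  calc v * v = (∑ x ∈ s, ω x * p x) ^ 2 := by rw [← hv]; ring
    _ ≤ _ := key
end

section
/- Pearl's update rule increases validity: let c : X → D(Y) be a channel, σ a distribution on X, and q a predicate on Y with σ ⊨ (c≪q) ≠ 0. Define the Pearl update σ_P = σ|_{c≪q}. Then (c≫σ_P ⊨ q) ≥ (c≫σ ⊨ q). -/
open Function

private lemma pearl_aux {X Y : Type*} (c : X → Y → ℝ) (q : Y → ℝ) (ρ : X → ℝ)
    (S : Finset X) (T : Finset Y)
    (hρS : Function.support ρ ⊆ ↑S) (hcT : ∀ x ∈ S, ∀ y, c x y ≠ 0 → y ∈ T) :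
    ∑ᶠ y, (∑ᶠ x, ρ x * c x y) * q y = ∑ x ∈ S, ρ x * ∑ y ∈ T, c x y * q y := by
  have hinner : ∀ y, ∑ᶠ x, ρ x * c x y = ∑ x ∈ S, ρ x * c x y := fun y =>
    finsum_eq_finset_sum_of_support_subset _
      (fun x hx => hρS (left_ne_zero_of_mul hx))
  calc ∑ᶠ y, (∑ᶠ x, ρ x * c x y) * q y
      = ∑ᶠ y, (∑ x ∈ S, ρ x * c x y) * q y := finsum_congr fun y => by rw [hinner]
    _ = ∑ y ∈ T, (∑ x ∈ S, ρ x * c x y) * q y := by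
        apply finsum_eq_finset_sum_of_support_subset
        intro y hy
        by_contra hyT
        apply hy
        have hz : ∀ x ∈ S, ρ x * c x y = 0 := fun x hx => by
          by_cases h : c x y = 0
          · simp [h]
          · exact absurd (hcT x hx y h) hyT
        simp [Finset.sum_eq_zero hz]
    _ = ∑ x ∈ S, ρ x * ∑ y ∈ T, c x y * q y := by
        simp_rw [Finset.sum_mul]
        rw [Finset.sum_comm]
        simp_rw [Finset.mul_sum, mul_assoc]

/-- Pearl's update rule increases validity:
(c≫σ_P ⊨ q) ≥ (c≫σ ⊨ q) for σ_P = σ|_{c≪q}. -/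
theorem pearl_update_increases_validity {X Y : Type*}
    (c : X → Y → ℝ) (σ : X → ℝ) (q : Y → ℝ)
    (hc0 : ∀ x y, 0 ≤ c x y) (hcfin : ∀ x, (Function.support (c x)).Finite)
    (hcsum : ∀ x, ∑ᶠ y, c x y = 1)
    (hσ0 : ∀ x, 0 ≤ σ x) (hσ1 : ∀ x, σ x ≤ 1)
    (hσfin : (Function.support σ).Finite) (hσsum : ∑ᶠ x, σ x = 1)
    (hq0 : ∀ y, 0 ≤ q y) (hq1 : ∀ y, q y ≤ 1)
    (pull : X → ℝ) (hpull : ∀ x, pull x = ∑ᶠ y, c x y * q y)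
    (v : ℝ) (hv : v = ∑ᶠ x, σ x * pull x) (hv0 : v ≠ 0)
    (σP : X → ℝ) (hσP : ∀ x, σP x = σ x * pull x / v) :
    ∑ᶠ y, (∑ᶠ x, σ x * c x y) * q y ≤ ∑ᶠ y, (∑ᶠ x, σP x * c x y) * q y := by
  classical
  set S : Finset X := hσfin.toFinset with hS
  set T : Finset Y := S.biUnion (fun x => (hcfin x).toFinset) with hT
  have hσS : Function.support σ ⊆ ↑S := by
    intro x hx; simp [hS, hx]
  have hcT : ∀ x ∈ S, ∀ y, c x y ≠ 0 → y ∈ T := by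
    intro x hx y hy
    exact Finset.mem_biUnion.2 ⟨x, hx, by simp [hy]⟩
  have hσPS : Function.support σP ⊆ ↑S := by
    intro x hx
    apply hσS
    intro h
    exact hx (by simp [hσP, h])
  have hpullT : ∀ x ∈ S, pull x = ∑ y ∈ T, c x y * q y := by
    intro x hx
    rw [hpull]
    exact finsum_eq_finset_sum_of_support_subset _
      (fun y hy => hcT x hx y (left_ne_zero_of_mul hy))
  have hL : ∑ᶠ y, (∑ᶠ x, σ x * c x y) * q y = ∑ x ∈ S, σ x * pull x := by
    rw [pearl_aux c q σ S T hσS hcT]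
    exact Finset.sum_congr rfl fun x hx => by rw [hpullT x hx]
  have hR : ∑ᶠ y, (∑ᶠ x, σP x * c x y) * q y = ∑ x ∈ S, σP x * pull x := by
    rw [pearl_aux c q σP S T hσPS hcT]
    exact Finset.sum_congr rfl fun x hx => by rw [hpullT x hx]
  have hvS : v = ∑ x ∈ S, σ x * pull x := by
    rw [hv]
    exact finsum_eq_finset_sum_of_support_subset _
      (fun x hx => hσS (left_ne_zero_of_mul hx))
  have hpnn : ∀ x, 0 ≤ pull x := fun x => by
    rw [hpull]; exact finsum_nonneg fun y => mul_nonneg (hc0 x y) (hq0 y)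
  have hvnn : 0 ≤ v := by
    rw [hvS]; exact Finset.sum_nonneg fun x _ => mul_nonneg (hσ0 x) (hpnn x)
  have hvpos : 0 < v := lt_of_le_of_ne hvnn (Ne.symm hv0)
  have hσsumS : ∑ x ∈ S, σ x = 1 := by
    rw [← hσsum]
    exact (finsum_eq_finset_sum_of_support_subset _ hσS).symm
  -- Cauchy–Schwarz
  have key := Finset.sum_mul_sq_le_sq_mul_sq S (fun x => Real.sqrt (σ x))
    (fun x => Real.sqrt (σ x) * pull x)
  have e1 : ∀ x ∈ S, Real.sqrt (σ x) * (Real.sqrt (σ x) * pull x) = σ x * pull x := by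
    intro x _
    rw [← mul_assoc, Real.mul_self_sqrt (hσ0 x)]
  have e2 : ∀ x ∈ S, Real.sqrt (σ x) ^ 2 = σ x := fun x _ => Real.sq_sqrt (hσ0 x)
  have e3 : ∀ x ∈ S, (Real.sqrt (σ x) * pull x) ^ 2 = σ x * pull x ^ 2 := by
    intro x _
    rw [mul_pow, Real.sq_sqrt (hσ0 x)]
  rw [Finset.sum_congr rfl e1, Finset.sum_congr rfl e2, Finset.sum_congr rfl e3,
    hσsumS, one_mul, ← hvS] at key
  rw [hL, hR, ← hvS]
  have hRv : ∑ x ∈ S, σP x * pull x = (∑ x ∈ S, σ x * pull x ^ 2) / v := by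
    rw [Finset.sum_div]
    exact Finset.sum_congr rfl fun x _ => by rw [hσP]; ring
  rw [hRv, le_div_iff₀ hvpos, ← sq]
  exact key
end

section
/- The state pushed forward along the Bayesian inversion of a deterministic channel is a perfect fit: for a function f : X → Y, a distribution σ on X, and a distribution τ on Y whose support is contained in the support of the pushforward f_*σ, the Jeffrey update σ' = (f^†_σ)≫τ satisfies f_*σ' = τ, where f^†_σ(y)(x) = σ(x)·[f(x)=y]/(f_*σ)(y). -/
/-- For a deterministic channel (a function f), the Jeffrey update
σ' = (f^†_σ)≫τ is a perfect fit: f_*σ' = τ. -/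
theorem deterministic_jeffrey_perfect_fit {X Y : Type*} [DecidableEq Y] (f : X → Y)
    (σ : X → ℝ) (τ : Y → ℝ)
    (hσ0 : ∀ x, 0 ≤ σ x) (hσ1 : ∀ x, σ x ≤ 1)
    (hσfin : (Function.support σ).Finite) (hσsum : ∑ᶠ x, σ x = 1)
    (hτ0 : ∀ y, 0 ≤ τ y) (hτ1 : ∀ y, τ y ≤ 1)
    (hτfin : (Function.support τ).Finite) (hτsum : ∑ᶠ y, τ y = 1)
    (fstar : Y → ℝ) (hfstar : ∀ y, fstar y = ∑ᶠ x, if f x = y then σ x else 0)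
    (hsupp : ∀ y, τ y ≠ 0 → fstar y ≠ 0)
    (dag : Y → X → ℝ)
    (hdag : ∀ y x, dag y x = σ x * (if f x = y then 1 else 0) / fstar y)
    (σ' : X → ℝ) (hσ' : ∀ x, σ' x = ∑ᶠ y, τ y * dag y x) :
    ∀ y, (∑ᶠ x, if f x = y then σ' x else 0) = τ y := by
  intro y
  have hσ'x : ∀ x, σ' x = τ (f x) * σ x / fstar (f x) := by
    intro x
    rw [hσ' x, finsum_eq_single _ (f x)]
    · rw [hdag]; simp; ring
    · intro y' hy'
      rw [hdag, if_neg (fun h => hy' h.symm)]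
      simp
  set s := hσfin.toFinset with hs
  have hsub : (Function.support fun x => if f x = y then σ' x else 0) ⊆ ↑s := by
    intro x hx
    simp only [Function.mem_support] at hx
    simp only [hs, Finset.mem_coe, Set.Finite.mem_toFinset, Function.mem_support]
    intro h0
    apply hx
    rw [hσ'x, h0]
    simp
  have hsub2 : (Function.support fun x => if f x = y then σ x else 0) ⊆ ↑s := by
    intro x hx
    simp only [Function.mem_support] at hx
    simp only [hs, Finset.mem_coe, Set.Finite.mem_toFinset, Function.mem_support]
    intro h0
    apply hx
    rw [h0]; simp
  rw [finsum_eq_finset_sum_of_support_subset _ hsub]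
  have hfs : fstar y = ∑ x ∈ s, if f x = y then σ x else 0 := by
    rw [hfstar, finsum_eq_finset_sum_of_support_subset _ hsub2]
  by_cases hty : τ y = 0
  · rw [hty, Finset.sum_eq_zero]
    intro x _
    split
    · next h => rw [hσ'x, h, hty]; ring
    · rfl
  · have hf0 := hsupp y hty
    have : ∀ x ∈ s, (if f x = y then σ' x else 0)
        = τ y / fstar y * (if f x = y then σ x else 0) := by
      intro x _
      split
      · next h => rw [hσ'x, h]; ring
      · ring
    rw [Finset.sum_congr rfl this, ← Finset.mul_sum, ← hfs]
    field_simp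
end

section
/- Data processing inequality for KL divergence along a channel: for a channel c : X → D(Y) between finite sets and distributions ω, ρ on X with ρ of full support and c≫ρ of full support, D_KL(c≫ω, c≫ρ) ≤ D_KL(ω, ρ). -/
/-- Log-sum inequality. -/
lemma log_sum_ineq {ι : Type*} [Fintype ι] (a b : ι → ℝ)
    (ha : ∀ i, 0 ≤ a i) (hb : ∀ i, 0 ≤ b i)
    (hab : ∀ i, b i = 0 → a i = 0) (hB : 0 < ∑ i, b i) :
    (∑ i, a i) * Real.log ((∑ i, a i) / (∑ i, b i)) ≤ ∑ i, a i * Real.log (a i / b i) := by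
  set A := ∑ i, a i with hA
  set B := ∑ i, b i with hBdef
  rcases eq_or_lt_of_le (Finset.sum_nonneg (fun i _ => ha i) : (0:ℝ) ≤ A) with h0 | hApos
  · have hz : ∀ i ∈ Finset.univ, a i = 0 := by
      intro i _
      have := (Finset.sum_eq_zero_iff_of_nonneg (fun i _ => ha i)).mp h0.symm
      exact this i (Finset.mem_univ i)
    have hA0 : A = 0 := by rw [hA]; exact h0.symm
    rw [hA0]
    simp only [zero_mul]
    apply Finset.sum_nonneg
    intro i _
    rw [hz i (Finset.mem_univ i)]
    simp
  · -- pointwise: a i * Real.log (A / B) + a i - b i * (A / B) ≤ a i * Real.log (a i / b i)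
    have key : ∀ i ∈ Finset.univ, a i * Real.log (A / B) + a i - b i * (A / B)
        ≤ a i * Real.log (a i / b i) := by
      intro i _
      rcases eq_or_lt_of_le (ha i) with h0 | hai
      · rw [← h0]
        simp only [zero_mul, zero_add]
        have : 0 ≤ b i * (A / B) := mul_nonneg (hb i) (div_nonneg hApos.le hB.le)
        linarith
      · have hbi : 0 < b i := by
          rcases eq_or_lt_of_le (hb i) with h | h
          · exact absurd (hab i h.symm) (ne_of_gt hai)
          · exact h
        have ht : 0 < (A / B) / (a i / b i) := by positivity
        have hlog := Real.log_le_sub_one_of_pos ht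
        have heq : Real.log ((A / B) / (a i / b i)) = Real.log (A / B) - Real.log (a i / b i) :=
          Real.log_div (by positivity) (by positivity)
        rw [heq] at hlog
        have h2 : a i * (Real.log (A / B) - Real.log (a i / b i))
            ≤ a i * ((A / B) / (a i / b i) - 1) :=
          mul_le_mul_of_nonneg_left hlog hai.le
        have h3 : a i * ((A / B) / (a i / b i) - 1) = b i * (A / B) - a i := by
          field_simp
        nlinarith [h2, h3]
    have hsum := Finset.sum_le_sum key
    have hL : ∑ i, (a i * Real.log (A / B) + a i - b i * (A / B))
        = A * Real.log (A / B) + A - B * (A / B) := by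
      rw [Finset.sum_sub_distrib, Finset.sum_add_distrib, ← Finset.sum_mul, ← Finset.sum_mul]
    rw [hL] at hsum
    have : B * (A / B) = A := by field_simp
    linarith

/-- Data processing inequality for KL divergence along a channel. -/
theorem kl_data_processing {X Y : Type*} [Fintype X] [Fintype Y]
    (c : X → Y → ℝ) (ω ρ : X → ℝ)
    (hc0 : ∀ x y, 0 ≤ c x y) (hcsum : ∀ x, ∑ y, c x y = 1)
    (hω0 : ∀ x, 0 ≤ ω x) (hωsum : ∑ x, ω x = 1)
    (hρ0 : ∀ x, 0 < ρ x) (hρsum : ∑ x, ρ x = 1)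
    (hρpush : ∀ y, 0 < ∑ x, ρ x * c x y) :
    ∑ y, (∑ x, ω x * c x y) * Real.log ((∑ x, ω x * c x y) / ∑ x, ρ x * c x y)
      ≤ ∑ x, ω x * Real.log (ω x / ρ x) := by
  have step1 : ∀ y, (∑ x, ω x * c x y) * Real.log ((∑ x, ω x * c x y) / ∑ x, ρ x * c x y)
      ≤ ∑ x, ω x * c x y * Real.log (ω x / ρ x) := by
    intro y
    have hls := log_sum_ineq (fun x => ω x * c x y) (fun x => ρ x * c x y)
      (fun x => mul_nonneg (hω0 x) (hc0 x y)) (fun x => mul_nonneg (hρ0 x).le (hc0 x y))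
      (fun x h => by
        rcases mul_eq_zero.mp h with h | h
        · exact absurd h (ne_of_gt (hρ0 x))
        · show ω x * c x y = 0
          rw [h, mul_zero])
      (hρpush y)
    refine hls.trans (le_of_eq (Finset.sum_congr rfl fun x _ => ?_))
    show ω x * c x y * Real.log ((ω x * c x y) / (ρ x * c x y))
        = ω x * c x y * Real.log (ω x / ρ x)
    rcases eq_or_ne (c x y) 0 with h | h
    · rw [h]; ring
    · rw [mul_div_mul_right _ _ h]
  calc ∑ y, (∑ x, ω x * c x y) * Real.log ((∑ x, ω x * c x y) / ∑ x, ρ x * c x y)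
      ≤ ∑ y, ∑ x, ω x * c x y * Real.log (ω x / ρ x) :=
        Finset.sum_le_sum (fun y _ => step1 y)
    _ = ∑ x, ω x * Real.log (ω x / ρ x) := by
        rw [Finset.sum_comm]
        refine Finset.sum_congr rfl fun x _ => ?_
        calc ∑ y, ω x * c x y * Real.log (ω x / ρ x)
            = (∑ y, c x y) * (ω x * Real.log (ω x / ρ x)) := by
              rw [Finset.sum_mul]
              exact Finset.sum_congr rfl fun y _ => by ring
          _ = ω x * Real.log (ω x / ρ x) := by rw [hcsum x, one_mul]
end

section
/- Jeffrey's update rule decreases KL divergence: let c : X → D(Y) be a channel with Y finite, σ a distribution on X such that c≫σ has full support, and τ a distribution on Y ('evidence'). Define the Jeffrey update σ_J = (c^†_σ)≫τ, where c^†_σ(y)(x) = σ(x)·c(x)(y)/(c≫σ)(y). Then D_KL(τ, c≫σ_J) ≤ D_KL(τ, c≫σ). -/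
open Finset

/-- Jeffrey's update rule decreases KL divergence:
D_KL(τ, c≫σ_J) ≤ D_KL(τ, c≫σ) for σ_J = (c^†_σ)≫τ. -/
theorem jeffrey_update_decreases_divergence {X Y : Type*} [Fintype Y]
    (c : X → Y → ℝ) (σ : X → ℝ) (τ : Y → ℝ)
    (hc0 : ∀ x y, 0 ≤ c x y) (hcsum : ∀ x, ∑ y, c x y = 1)
    (hσ0 : ∀ x, 0 ≤ σ x) (hσ1 : ∀ x, σ x ≤ 1)
    (hσfin : (Function.support σ).Finite) (hσsum : ∑ᶠ x, σ x = 1)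
    (hτ0 : ∀ y, 0 ≤ τ y) (hτ1 : ∀ y, τ y ≤ 1) (hτsum : ∑ y, τ y = 1)
    (push : Y → ℝ) (hpush : ∀ y, push y = ∑ᶠ x, σ x * c x y)
    (hfull : ∀ y, 0 < push y)
    (σJ : X → ℝ) (hσJ : ∀ x, σJ x = ∑ y, τ y * (σ x * c x y / push y))
    (pushJ : Y → ℝ) (hpushJ : ∀ y, pushJ y = ∑ᶠ x, σJ x * c x y) :
    ∑ y, τ y * Real.log (τ y / pushJ y) ≤ ∑ y, τ y * Real.log (τ y / push y) := by
  classical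
  set S : Finset X := hσfin.toFinset with hS
  have hmemS : ∀ x, x ∈ S ↔ σ x ≠ 0 := fun x => hσfin.mem_toFinset
  have hSpos : ∀ x ∈ S, 0 < σ x := fun x hx => (hσ0 x).lt_of_ne' ((hmemS x).1 hx)
  have hSzero : ∀ x ∉ S, σ x = 0 := fun x hx => by
    by_contra h; exact hx ((hmemS x).2 h)
  -- sums over S
  have hσS : ∑ x ∈ S, σ x = 1 := by
    rw [← hσsum]
    exact (finsum_eq_sum_of_support_subset σ (by simp [hS])).symm
  have hpushS : ∀ y, push y = ∑ x ∈ S, σ x * c x y := by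
    intro y
    rw [hpush y]
    refine finsum_eq_sum_of_support_subset _ ?_
    intro x hx
    have : σ x ≠ 0 := fun h => hx (by simp [h])
    simpa [hS, hmemS] using (hmemS x).2 this
  -- σJ nonneg, zero off S
  have hσJ0 : ∀ x, 0 ≤ σJ x := by
    intro x; rw [hσJ x]
    exact Finset.sum_nonneg fun y _ => mul_nonneg (hτ0 y)
      (div_nonneg (mul_nonneg (hσ0 x) (hc0 x y)) (hfull y).le)
  have hσJzero : ∀ x ∉ S, σJ x = 0 := by
    intro x hx; rw [hσJ x]
    simp [hSzero x hx]
  have hpushJS : ∀ y, pushJ y = ∑ x ∈ S, σJ x * c x y := by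
    intro y
    rw [hpushJ y]
    refine finsum_eq_sum_of_support_subset _ ?_
    intro x hx
    by_contra hxS
    exact hx (by simp [hσJzero x hxS])
  -- sum of σJ over S is 1
  have hσJsum : ∑ x ∈ S, σJ x = 1 := by
    have : ∑ x ∈ S, σJ x = ∑ y, τ y := by
      simp only [hσJ]
      rw [Finset.sum_comm]
      refine Finset.sum_congr rfl fun y _ => ?_
      have : ∑ x ∈ S, τ y * (σ x * c x y / push y)
          = τ y / push y * ∑ x ∈ S, σ x * c x y := by
        rw [Finset.mul_sum]; refine Finset.sum_congr rfl fun x _ => by ring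
      rw [this, ← hpushS y, div_mul_cancel₀ _ (hfull y).ne']
    rw [this, hτsum]
  -- positivity of σJ on the relevant part
  have hσJpos : ∀ y, 0 < τ y → ∀ x ∈ S, 0 < c x y → 0 < σJ x := by
    intro y hy x hxS hcxy
    rw [hσJ x]
    have hterm : 0 < τ y * (σ x * c x y / push y) :=
      mul_pos hy (div_pos (mul_pos (hSpos x hxS) hcxy) (hfull y))
    refine lt_of_lt_of_le hterm ?_
    exact Finset.single_le_sum (f := fun y' => τ y' * (σ x * c x y' / push y'))
      (fun y' _ => mul_nonneg (hτ0 y')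
        (div_nonneg (mul_nonneg (hσ0 x) (hc0 x y')) (hfull y').le))
      (Finset.mem_univ y)
  -- pushJ positive where τ positive
  have hpushJpos : ∀ y, 0 < τ y → 0 < pushJ y := by
    intro y hy
    have hne : ∃ x ∈ S, 0 < σ x * c x y := by
      by_contra h
      push_neg at h
      have : push y = 0 := by
        rw [hpushS y]
        refine Finset.sum_eq_zero fun x hx => le_antisymm (h x hx)
          (mul_nonneg (hσ0 x) (hc0 x y))
      exact absurd this (hfull y).ne'
    obtain ⟨x, hxS, hx⟩ := hne
    have hcxy : 0 < c x y := by
      rcases (hc0 x y).lt_or_eq with h | h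
      · exact h
      · rw [← h, mul_zero] at hx; exact absurd hx (lt_irrefl 0)
    have hσJx := hσJpos y hy x hxS hcxy
    rw [hpushJS y]
    refine lt_of_lt_of_le (mul_pos hσJx hcxy) ?_
    exact Finset.single_le_sum (f := fun x' => σJ x' * c x' y)
      (fun x' _ => mul_nonneg (hσJ0 x') (hc0 x' y)) hxS
  -- per-y Jensen
  have hJensen : ∀ y, 0 < τ y →
      ∑ x ∈ S, (σ x * c x y / push y) * Real.log (σJ x / σ x)
        ≤ Real.log (pushJ y / push y) := by
    intro y hy
    set T : Finset X := S.filter (fun x => 0 < c x y) with hT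
    have hczero : ∀ x ∈ S, x ∉ T → c x y = 0 := by
      intro x hxS hxT
      by_contra h
      exact hxT (Finset.mem_filter.2 ⟨hxS, (hc0 x y).lt_of_ne' h⟩)
    have hsum_eqL : ∑ x ∈ S, (σ x * c x y / push y) * Real.log (σJ x / σ x)
        = ∑ x ∈ T, (σ x * c x y / push y) * Real.log (σJ x / σ x) := by
      refine (Finset.sum_subset (Finset.filter_subset _ _) ?_).symm
      intro x hxS hxT
      simp [hczero x hxS hxT]
    have hwsum : ∑ x ∈ T, σ x * c x y / push y = 1 := by
      have : ∑ x ∈ T, σ x * c x y = push y := by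
        rw [hpushS y]
        refine Finset.sum_subset (Finset.filter_subset _ _) ?_
        intro x hxS hxT
        simp [hczero x hxS hxT]
      rw [← Finset.sum_div, this, div_self (hfull y).ne']
    have hptsum : ∑ x ∈ T, (σ x * c x y / push y) • (σJ x / σ x) = pushJ y / push y := by
      have h1 : ∀ x ∈ T, (σ x * c x y / push y) • (σJ x / σ x) = σJ x * c x y / push y := by
        intro x hxT
        have hσx := (hSpos x (Finset.mem_filter.1 hxT).1).ne'
        have h2 : (σ x * c x y / push y) • (σJ x / σ x)
            = (σ x / σ x) * (σJ x * c x y / push y) := by rw [smul_eq_mul]; ring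
        rw [h2, div_self hσx, one_mul]
      rw [Finset.sum_congr rfl h1]
      have : ∑ x ∈ T, σJ x * c x y = pushJ y := by
        rw [hpushJS y]
        refine Finset.sum_subset (Finset.filter_subset _ _) ?_
        intro x hxS hxT
        simp [hczero x hxS hxT]
      rw [← Finset.sum_div, this]
    rw [hsum_eqL]
    have := strictConcaveOn_log_Ioi.concaveOn.le_map_sum
      (t := T) (w := fun x => σ x * c x y / push y) (p := fun x => σJ x / σ x)
      (fun x _ => div_nonneg (mul_nonneg (hσ0 x) (hc0 x y)) (hfull y).le)
      hwsum
      (fun x hxT => by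
        have hxS := (Finset.mem_filter.1 hxT).1
        have hc := (Finset.mem_filter.1 hxT).2
        exact Set.mem_Ioi.2 (div_pos (hσJpos y hy x hxS hc) (hSpos x hxS)))
    rw [hptsum] at this
    simpa using this
  -- aggregate: Σ_y τ y * log(pushJ/push) ≥ Σ_x σJ log(σJ/σ) ≥ 0
  have hagg : ∑ x ∈ S, σJ x * Real.log (σJ x / σ x)
      ≤ ∑ y, τ y * Real.log (pushJ y / push y) := by
    have hswap : ∑ x ∈ S, σJ x * Real.log (σJ x / σ x)
        = ∑ y, τ y * ∑ x ∈ S, (σ x * c x y / push y) * Real.log (σJ x / σ x) := by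
      have : ∀ x ∈ S, σJ x * Real.log (σJ x / σ x)
          = ∑ y, τ y * ((σ x * c x y / push y) * Real.log (σJ x / σ x)) := by
        intro x _
        rw [hσJ x, Finset.sum_mul]
        refine Finset.sum_congr rfl fun y _ => by ring
      rw [Finset.sum_congr rfl this, Finset.sum_comm]
      refine Finset.sum_congr rfl fun y _ => by rw [Finset.mul_sum]
    rw [hswap]
    refine Finset.sum_le_sum fun y _ => ?_
    rcases eq_or_lt_of_le (hτ0 y) with h | h
    · simp [← h]
    · exact mul_le_mul_of_nonneg_left (hJensen y h) (hτ0 y)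
  have hGibbs : 0 ≤ ∑ x ∈ S, σJ x * Real.log (σJ x / σ x) := by
    have hbound : ∀ x ∈ S, σJ x - σ x ≤ σJ x * Real.log (σJ x / σ x) := by
      intro x hxS
      rcases eq_or_lt_of_le (hσJ0 x) with h | h
      · have : σ x ≤ 1 := hσ1 x
        simp [← h]
        -- need σ x ≥ 0 → -σ x ≤ 0? goal: σJ x - σ x ≤ 0 with σJ x = 0
        exact hσ0 x
      · have hσx := hSpos x hxS
        have hlog : 1 - (σJ x / σ x)⁻¹ ≤ Real.log (σJ x / σ x) :=
          Real.one_sub_inv_le_log_of_pos (div_pos h hσx)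
        have h2 : σJ x * (1 - (σJ x / σ x)⁻¹) = σJ x - σ x := by
          field_simp
        calc σJ x - σ x = σJ x * (1 - (σJ x / σ x)⁻¹) := h2.symm
          _ ≤ σJ x * Real.log (σJ x / σ x) := mul_le_mul_of_nonneg_left hlog h.le
    calc (0:ℝ) = ∑ x ∈ S, σJ x - ∑ x ∈ S, σ x := by rw [hσJsum, hσS]; ring
      _ = ∑ x ∈ S, (σJ x - σ x) := by rw [Finset.sum_sub_distrib]
      _ ≤ _ := Finset.sum_le_sum hbound
  -- final rewriting
  have hfinal : ∑ y, τ y * Real.log (τ y / push y) - ∑ y, τ y * Real.log (τ y / pushJ y)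
      = ∑ y, τ y * Real.log (pushJ y / push y) := by
    rw [← Finset.sum_sub_distrib]
    refine Finset.sum_congr rfl fun y _ => ?_
    rcases eq_or_lt_of_le (hτ0 y) with h | h
    · simp [← h]
    · have hτy := h.ne'
      have hpy := (hfull y).ne'
      have hpJy := (hpushJpos y h).ne'
      rw [← mul_sub, Real.log_div hτy hpy, Real.log_div hτy hpJy,
        Real.log_div hpJy hpy]
      ring
  linarith [hGibbs.trans hagg, hfinal]
end

section
/- Interdefinability (Pearl from Jeffrey): for a channel c : X → D(Y), distribution σ on X with c≫σ of full support, and predicate q on Y with σ ⊨ c≪q ≠ 0, Pearl's update equals a Jeffrey update with the updated prediction as evidence: σ|_{c≪q} = (c^†_σ)≫((c≫σ)|_q). -/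
/-- Interdefinability (Pearl from Jeffrey):
σ|_{c≪q} = (c^†_σ)≫((c≫σ)|_q). -/
theorem pearl_from_jeffrey {X Y : Type*} [Fintype Y]
    (c : X → Y → ℝ) (σ : X → ℝ) (q : Y → ℝ)
    (hc0 : ∀ x y, 0 ≤ c x y) (hcsum : ∀ x, ∑ y, c x y = 1)
    (hσ0 : ∀ x, 0 ≤ σ x) (hσ1 : ∀ x, σ x ≤ 1)
    (hσfin : (Function.support σ).Finite) (hσsum : ∑ᶠ x, σ x = 1)
    (hq0 : ∀ y, 0 ≤ q y) (hq1 : ∀ y, q y ≤ 1)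
    (push : Y → ℝ) (hpush : ∀ y, push y = ∑ᶠ x, σ x * c x y)
    (hfull : ∀ y, 0 < push y)
    (pull : X → ℝ) (hpull : ∀ x, pull x = ∑ y, c x y * q y)
    (v : ℝ) (hv : v = ∑ᶠ x, σ x * pull x) (hv0 : v ≠ 0) :
    ∀ x, σ x * pull x / v
      = ∑ y, (push y * q y / ∑ y', push y' * q y') * (σ x * c x y / push y) := by
  intro x
  set T := hσfin.toFinset with hT
  have hsub : ∀ f : X → ℝ, (∑ᶠ x, σ x * f x) = ∑ x ∈ T, σ x * f x := by
    intro f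
    refine finsum_eq_finset_sum_of_support_subset _ ?_
    intro x hx
    have : σ x ≠ 0 := by
      intro h; simp [Function.mem_support, h] at hx
    simpa [hT, Function.mem_support] using this
  have hS : (∑ y', push y' * q y') = v := by
    rw [hv, hsub]
    have : ∀ y, push y = ∑ x ∈ T, σ x * c x y := fun y => by rw [hpush, hsub]
    simp only [this, hpull, Finset.sum_mul, Finset.mul_sum]
    rw [Finset.sum_comm]
    apply Finset.sum_congr rfl
    intro x _
    apply Finset.sum_congr rfl
    intro y _
    ring
  rw [hS, hpull, Finset.mul_sum, Finset.sum_div]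
  apply Finset.sum_congr rfl
  intro y _
  have hp := (hfull y).ne'
  field_simp
end

section
/- Interdefinability (Jeffrey from Pearl): for a channel c : X → D(Y) with Y finite, distribution σ on X with c≫σ of full support, and evidence distribution τ on Y, the Jeffrey update equals a Pearl update with the likelihood-ratio predicate: (c^†_σ)≫τ = σ|_q where q(y) = τ(y)/(c≫σ)(y), assuming q takes values in [0,1] (or after rescaling, which does not affect updating). -/
/-- Interdefinability (Jeffrey from Pearl):
(c^†_σ)≫τ = σ|_{c≪q} for the likelihood-ratio predicate q(y) = τ(y)/(c≫σ)(y). -/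
theorem jeffrey_from_pearl {X Y : Type*} [Fintype Y]
    (c : X → Y → ℝ) (σ : X → ℝ) (τ : Y → ℝ)
    (hc0 : ∀ x y, 0 ≤ c x y) (hcsum : ∀ x, ∑ y, c x y = 1)
    (hσ0 : ∀ x, 0 ≤ σ x) (hσ1 : ∀ x, σ x ≤ 1)
    (hσfin : (Function.support σ).Finite) (hσsum : ∑ᶠ x, σ x = 1)
    (hτ0 : ∀ y, 0 ≤ τ y) (hτ1 : ∀ y, τ y ≤ 1) (hτsum : ∑ y, τ y = 1)
    (push : Y → ℝ) (hpush : ∀ y, push y = ∑ᶠ x, σ x * c x y)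
    (hfull : ∀ y, 0 < push y)
    (q : Y → ℝ) (hq : ∀ y, q y = τ y / push y) (hq1 : ∀ y, q y ≤ 1)
    (pull : X → ℝ) (hpull : ∀ x, pull x = ∑ y, c x y * q y) :
    ∀ x, ∑ y, τ y * (σ x * c x y / push y)
      = σ x * pull x / (∑ᶠ x', σ x' * pull x') := by
  intro x
  have hS : ∀ f : X → ℝ, (∀ x', σ x' = 0 → f x' = 0) →
      ∑ᶠ x', f x' = ∑ x' ∈ hσfin.toFinset, f x' := by
    intro f hf
    apply finsum_eq_finset_sum_of_support_subset
    intro x' hx'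
    simp only [Set.Finite.coe_toFinset, Function.mem_support]
    intro h0
    exact hx' (hf x' h0)
  have hpy : ∀ y, ∑ x' ∈ hσfin.toFinset, σ x' * c x' y = push y := by
    intro y
    rw [hpush y, hS (fun x' => σ x' * c x' y) (by intro x' h; simp [h])]
  have hden : ∑ᶠ x', σ x' * pull x' = 1 := by
    rw [hS (fun x' => σ x' * pull x') (by intro x' h; simp [h])]
    have h1 : ∀ x' ∈ hσfin.toFinset, σ x' * pull x' = ∑ y, σ x' * c x' y * q y := by
      intro x' _
      rw [hpull, Finset.mul_sum]
      exact Finset.sum_congr rfl fun y _ => by ring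
    rw [Finset.sum_congr rfl h1, Finset.sum_comm]
    calc ∑ y, ∑ x' ∈ hσfin.toFinset, σ x' * c x' y * q y
        = ∑ y, push y * q y := by
          refine Finset.sum_congr rfl fun y _ => ?_
          rw [← hpy y, Finset.sum_mul]
      _ = ∑ y, τ y := by
          refine Finset.sum_congr rfl fun y _ => ?_
          rw [hq, mul_div_assoc', mul_comm, mul_div_assoc, div_self (hfull y).ne', mul_one]
      _ = 1 := hτsum
  rw [hden, div_one, hpull, Finset.mul_sum]
  refine Finset.sum_congr rfl fun y _ => ?_
  rw [hq]
  have := (hfull y).ne'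
  field_simp
end

section
/- Friedland–Karlin type inequality for conditional expectations: let ω be a distribution on a finite set with a test p₁,…,pₙ (Σ_i p_i = 1) such that all v_i := ω ⊨ p_i are nonzero. Then for all r₁,…,rₙ ∈ (0,1] with Σ_i r_i = 1: Σ_i [ r_i·v_i / (Σ_j r_j·(ω|_{p_j} ⊨ p_i)) ] ≤ 1. -/
/-!
With `v j = ω ⊨ p j`, Jeffrey's update `τ = ∑ j, r j • ω|_{p j}` has density
`f x = ∑ j, r j * p j x / v j` with respect to `ω`, and the `i`-th denominator is `τ ⊨ p i`.
Cauchy–Schwarz gives `(ω ⊨ p i)² ≤ (τ ⊨ p i) * ∑ x, ω x * p i x / f x`, so the `i`-th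
summand is at most `r i / v i * ∑ x, ω x * p i x / f x`; summing over `i` recovers `f` and
leaves `∑ x, ω x = 1`.
-/

open Finset

section

variable {X ι : Type*} [Fintype ι]

lemma sq_sum_le_sum_mul_mul_sum_div [Fintype X] {w f : X → ℝ} (hw : ∀ x, 0 ≤ w x)
    (hf : ∀ x, 0 < f x) :
    (∑ x, w x) ^ 2 ≤ (∑ x, w x * f x) * ∑ x, w x / f x :=
  sum_sq_le_sum_mul_sum_of_sq_le_mul univ (fun x _ => mul_nonneg (hw x) (hf x).le)
    (fun x _ => div_nonneg (hw x) (hf x).le) fun x _ => by field_simp [(hf x).ne']; rfl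

lemma div_le_div_of_sq_le_mul {v D E : ℝ} (hv : 0 < v) (hD : 0 ≤ D) (h : v ^ 2 ≤ D * E) :
    v / D ≤ E / v := by
  have hD_pos : 0 < D := hD.lt_of_ne <| by rintro rfl; nlinarith
  rw [div_le_div_iff₀ hD_pos hv]
  nlinarith

noncomputable def jeffreyDensity (p : ι → X → ℝ) (v r : ι → ℝ) (x : X) : ℝ :=
  ∑ j, r j * p j x / v j

lemma sum_mul_sum_div_eq_sum_mul_jeffreyDensity [Fintype X] (p : ι → X → ℝ) (v r : ι → ℝ)
    (g : X → ℝ) :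
    ∑ j, r j * ((∑ x, g x * p j x) / v j) = ∑ x, g x * jeffreyDensity p v r x := by
  simp only [jeffreyDensity, sum_div, mul_sum]
  rw [sum_comm]
  exact sum_congr rfl fun x _ => sum_congr rfl fun j _ => by ring

lemma jeffreyDensity_pos {p : ι → X → ℝ} {v r : ι → ℝ} (hp : ∀ i x, 0 ≤ p i x)
    (htest : ∀ x, ∑ i, p i x = 1) (hv : ∀ i, 0 < v i) (hr : ∀ i, 0 < r i) (x : X) :
    0 < jeffreyDensity p v r x := by
  obtain ⟨j, -, hj⟩ : ∃ j ∈ univ, (0 : ℝ) < p j x :=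
    exists_lt_of_sum_lt (by simp [htest x])
  exact sum_pos' (fun i _ => div_nonneg (mul_nonneg (hr i).le (hp i x)) (hv i).le)
    ⟨j, mem_univ j, div_pos (mul_pos (hr j) hj) (hv j)⟩

theorem sum_mul_div_sum_mul_jeffreyDensity_le [Fintype X] {ω : X → ℝ} {p : ι → X → ℝ}
    {v r : ι → ℝ} (hω : ∀ x, 0 ≤ ω x) (hp : ∀ i x, 0 ≤ p i x)
    (hv : ∀ i, v i = ∑ x, ω x * p i x) (hv_pos : ∀ i, 0 < v i) (hr : ∀ i, 0 ≤ r i)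
    (hf : ∀ x, 0 < jeffreyDensity p v r x) :
    ∑ i, r i * v i / ∑ x, ω x * p i x * jeffreyDensity p v r x ≤ ∑ x, ω x := by
  set f := jeffreyDensity p v r
  have hcs (i : ι) : v i ^ 2 ≤ (∑ x, ω x * p i x * f x) * ∑ x, ω x / f x * p i x := by
    have h_eq : ∀ x, ω x / f x * p i x = ω x * p i x / f x := fun x => div_mul_eq_mul_div ..
    simpa only [hv i, h_eq] using
      sq_sum_le_sum_mul_mul_sum_div (fun x => mul_nonneg (hω x) (hp i x)) hf
  calc ∑ i, r i * v i / ∑ x, ω x * p i x * f x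
      ≤ ∑ i, r i * ((∑ x, ω x / f x * p i x) / v i) :=
        sum_le_sum fun i _ => by
          rw [mul_div_assoc]
          exact mul_le_mul_of_nonneg_left (div_le_div_of_sq_le_mul (hv_pos i)
            (sum_nonneg fun x _ => mul_nonneg (mul_nonneg (hω x) (hp i x)) (hf x).le) (hcs i))
            (hr i)
    _ = ∑ x, ω x / f x * f x := sum_mul_sum_div_eq_sum_mul_jeffreyDensity p v r _
    _ = ∑ x, ω x := sum_congr rfl fun x _ => div_mul_cancel₀ _ (hf x).ne'

end

theorem friedland_karlin_inequality_general {X : Type*} [Fintype X] {n : ℕ}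
    (ω : X → ℝ) (p : Fin n → X → ℝ)
    (hω0 : ∀ x, 0 ≤ ω x) (hωsum : ∑ x, ω x = 1)
    (hp0 : ∀ i x, 0 ≤ p i x)
    (htest : ∀ x, ∑ i, p i x = 1)
    (v : Fin n → ℝ) (hv : ∀ i, v i = ∑ x, ω x * p i x) (hv0 : ∀ i, v i ≠ 0)
    (r : Fin n → ℝ) (hr0 : ∀ i, 0 < r i) :
    ∑ i, r i * v i / (∑ j, r j * ((∑ x, ω x * (p i x * p j x)) / v j)) ≤ 1 := by
  have hv_pos (i : Fin n) : 0 < v i :=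
    (hv i ▸ sum_nonneg fun x _ => mul_nonneg (hω0 x) (hp0 i x)).lt_of_ne' (hv0 i)
  simp only [← mul_assoc, sum_mul_sum_div_eq_sum_mul_jeffreyDensity p v r]
  exact hωsum ▸ sum_mul_div_sum_mul_jeffreyDensity_le hω0 hp0 hv hv_pos (fun i => (hr0 i).le)
    (jeffreyDensity_pos hp0 htest hv_pos hr0)

/-- Friedland–Karlin type inequality for conditional expectations. -/
theorem friedland_karlin_inequality {X : Type*} [Fintype X] {n : ℕ}
    (ω : X → ℝ) (p : Fin n → X → ℝ)
    (hω0 : ∀ x, 0 ≤ ω x) (hωsum : ∑ x, ω x = 1)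
    (hp0 : ∀ i x, 0 ≤ p i x) (hp1 : ∀ i x, p i x ≤ 1)
    (htest : ∀ x, ∑ i, p i x = 1)
    (v : Fin n → ℝ) (hv : ∀ i, v i = ∑ x, ω x * p i x) (hv0 : ∀ i, v i ≠ 0)
    (r : Fin n → ℝ) (hr0 : ∀ i, 0 < r i) (hr1 : ∀ i, r i ≤ 1)
    (hrsum : ∑ i, r i = 1) :
    ∑ i, r i * v i / (∑ j, r j * ((∑ x, ω x * (p i x * p j x)) / v j)) ≤ 1 :=
  friedland_karlin_inequality_general ω p hω0 hωsum hp0 htest v hv hv0 r hr0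
end

section
/- Key Jeffrey inequality: let c : X → D(Y) be a channel with Y finite, σ a distribution on X such that (c≫σ)(y) > 0 for all y, and τ a distribution on Y with full support. Then Σ_y [ τ(y)·(c≫σ)(y) / (c≫((c^†_σ)≫τ))(y) ] ≤ 1, where c^†_σ(y)(x) = σ(x)·c(x)(y)/(c≫σ)(y). -/
/-- Key Jeffrey inequality:
Σ_y τ(y)·(c≫σ)(y) / (c≫((c^†_σ)≫τ))(y) ≤ 1. -/
theorem key_jeffrey_inequality {X Y : Type*} [Fintype Y]
    (c : X → Y → ℝ) (σ : X → ℝ) (τ : Y → ℝ)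
    (hc0 : ∀ x y, 0 ≤ c x y) (hcsum : ∀ x, ∑ y, c x y = 1)
    (hσ0 : ∀ x, 0 ≤ σ x) (hσ1 : ∀ x, σ x ≤ 1)
    (hσfin : (Function.support σ).Finite) (hσsum : ∑ᶠ x, σ x = 1)
    (hτ0 : ∀ y, 0 < τ y) (hτ1 : ∀ y, τ y ≤ 1) (hτsum : ∑ y, τ y = 1)
    (push : Y → ℝ) (hpush : ∀ y, push y = ∑ᶠ x, σ x * c x y)
    (hfull : ∀ y, 0 < push y)
    (σJ : X → ℝ) (hσJ : ∀ x, σJ x = ∑ y, τ y * (σ x * c x y / push y)) :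
    ∑ y, τ y * push y / (∑ᶠ x, σJ x * c x y) ≤ 1 := by
  classical
  set S : Finset X := hσfin.toFinset with hS
  have hmemS : ∀ x, x ∈ S ↔ σ x ≠ 0 := by
    intro x; simp [hS, Set.Finite.mem_toFinset, Function.mem_support]
  -- r x = ∑ y, τ y * c x y / push y
  set r : X → ℝ := fun x => ∑ y, τ y * c x y / push y with hr
  have hrnn : ∀ x, 0 ≤ r x := fun x =>
    Finset.sum_nonneg fun y _ =>
      div_nonneg (mul_nonneg (hτ0 y).le (hc0 x y)) (hfull y).le
  have hr0 : ∀ x, 0 < r x := by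
    intro x
    obtain ⟨y, _, hy⟩ : ∃ y ∈ Finset.univ, (0:ℝ) < c x y := by
      apply Finset.exists_lt_of_sum_lt (f := fun _ => (0:ℝ))
      simp [hcsum x]
    apply Finset.sum_pos' (fun y _ =>
      div_nonneg (mul_nonneg (hτ0 y).le (hc0 x y)) (hfull y).le)
    exact ⟨y, Finset.mem_univ y,
      div_pos (mul_pos (hτ0 y) hy) (hfull y)⟩
  have hσJ' : ∀ x, σJ x = σ x * r x := by
    intro x
    rw [hσJ, hr, Finset.mul_sum]
    exact Finset.sum_congr rfl fun y _ => by ring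
  have hpushS : ∀ y, push y = ∑ x ∈ S, σ x * c x y := by
    intro y
    rw [hpush]
    apply finsum_eq_sum_of_support_subset
    intro x hx
    have : σ x ≠ 0 := fun h0 => hx (by simp [Function.mem_support, h0])
    exact Finset.mem_coe.2 ((hmemS x).2 this)
  have hσS : ∑ x ∈ S, σ x = 1 := by
    rw [← hσsum]
    exact (finsum_eq_sum_of_support_subset σ (by
      intro x hx; exact Finset.mem_coe.2 ((hmemS x).2 hx))).symm
  set q : Y → ℝ := fun y => ∑ x ∈ S, σ x * r x * c x y with hqdef
  have hqeq : ∀ y, (∑ᶠ x, σJ x * c x y) = q y := by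
    intro y
    rw [finsum_eq_sum_of_support_subset (fun x => σJ x * c x y) (s := S) (by
      intro x hx
      have : σ x ≠ 0 := by
        intro h0
        apply hx
        simp [Function.mem_support, hσJ' x, h0]
      exact Finset.mem_coe.2 ((hmemS x).2 this))]
    exact Finset.sum_congr rfl fun x _ => by rw [hσJ' x]
  have hq0 : ∀ y, 0 < q y := by
    intro y
    obtain ⟨x, hxS, hx⟩ : ∃ x ∈ S, (0:ℝ) < σ x * c x y := by
      apply Finset.exists_lt_of_sum_lt (f := fun _ => (0:ℝ))
      simp [← hpushS y, hfull y]
    apply Finset.sum_pos' (fun x _ =>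
      mul_nonneg (mul_nonneg (hσ0 x) (hrnn x)) (hc0 x y))
    refine ⟨x, hxS, ?_⟩
    have hσx : 0 < σ x := lt_of_le_of_ne (hσ0 x) (Ne.symm ((hmemS x).1 hxS))
    have hcx : 0 < c x y := by
      by_contra h
      push_neg at h
      have : c x y = 0 := le_antisymm h (hc0 x y)
      rw [this, mul_zero] at hx; exact lt_irrefl 0 hx
    exact mul_pos (mul_pos hσx (hr0 x)) hcx
  -- Cauchy–Schwarz per y
  have CS : ∀ y, (push y) ^ 2 ≤ q y * ∑ x ∈ S, σ x * c x y / r x := by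
    intro y
    rw [hpushS y]
    apply Finset.sum_sq_le_sum_mul_sum_of_sq_eq_mul S
      (f := fun x => σ x * r x * c x y) (g := fun x => σ x * c x y / r x)
    · exact fun x _ => mul_nonneg (mul_nonneg (hσ0 x) (hrnn x)) (hc0 x y)
    · exact fun x _ => div_nonneg (mul_nonneg (hσ0 x) (hc0 x y)) (hrnn x)
    · intro x _
      field_simp [(hr0 x).ne']
  have key : ∀ y, τ y * push y / q y ≤
      ∑ x ∈ S, τ y * (σ x * c x y / r x) / push y := by
    intro y
    have hA : ∑ x ∈ S, τ y * (σ x * c x y / r x) / push y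
        = τ y * (∑ x ∈ S, σ x * c x y / r x) / push y := by
      rw [Finset.mul_sum, Finset.sum_div]
    rw [hA, div_le_div_iff₀ (hq0 y) (hfull y)]
    have := CS y
    nlinarith [hτ0 y, (hτ0 y).le, hfull y, hq0 y]
  calc ∑ y, τ y * push y / (∑ᶠ x, σJ x * c x y)
      = ∑ y, τ y * push y / q y := by
        exact Finset.sum_congr rfl fun y _ => by rw [hqeq y]
    _ ≤ ∑ y, ∑ x ∈ S, τ y * (σ x * c x y / r x) / push y :=
        Finset.sum_le_sum fun y _ => key y
    _ = ∑ x ∈ S, ∑ y, τ y * (σ x * c x y / r x) / push y := Finset.sum_comm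
    _ = ∑ x ∈ S, σ x := by
        apply Finset.sum_congr rfl
        intro x _
        have : ∀ y, τ y * (σ x * c x y / r x) / push y
            = (σ x / r x) * (τ y * c x y / push y) := by
          intro y; ring
        rw [Finset.sum_congr rfl fun y _ => this y, ← Finset.mul_sum]
        have hrx : ∑ i : Y, τ i * c x i / push i = r x := rfl
        rw [hrx]
        field_simp [(hr0 x).ne']
    _ = 1 := hσS
end
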